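/- Let D and D' be triangulated categories with full triangulated subcategories C ⊆ D and C' ⊆ D'. Suppose F : D → D' and G : D' → D form an adjoint pair of exact functors (F left adjoint to G) such that F(C) ⊆ C' and G(C') ⊆ C. Then F and G induce functors F̄ : D/C → D'/C' and Ḡ : D'/C' → D/C between the Verdier quotients, and F̄ is left adjoint to Ḡ. -/

import Mathlib

open CategoryTheory CategoryTheory.Limits CategoryTheory.Pretriangulated

/-- **Induced adjunction on Verdier quotients.**
Let `D` and `D'` be (pre)triangulated categories with full triangulated
subcategories `S ⊆ D` and `S' ⊆ D'`.  Suppose `F : D ⥤ D'` and `G : D' ⥤ D`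
are an adjoint pair of exact (triangulated) functors such that `F` sends `S`
into `S'` and `G` sends `S'` into `S`.  Then `F` and `G` induce functors
`F̄ : D/S ⥤ D'/S'` and `Ḡ : D'/S' ⥤ D/S` between the Verdier quotients
(compatible with the quotient functors), and `F̄` is left adjoint to `Ḡ`. -/
theorem adjunction_descends_to_verdier_quotients
    {D : Type*} {D' : Type*} [Category D] [Category D']
    [HasZeroObject D] [HasZeroObject D'] [Preadditive D] [Preadditive D']
    [HasShift D ℤ] [HasShift D' ℤ]
    [∀ n : ℤ, (CategoryTheory.shiftFunctor D n).Additive]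
    [∀ n : ℤ, (CategoryTheory.shiftFunctor D' n).Additive]
    [Pretriangulated D] [Pretriangulated D']
    (S : ObjectProperty D) (S' : ObjectProperty D') [S.IsTriangulated] [S'.IsTriangulated]
    (F : D ⥤ D') (G : D' ⥤ D)
    [F.CommShift ℤ] [G.CommShift ℤ] [F.IsTriangulated] [G.IsTriangulated]
    (adj : F ⊣ G)
    (hF : ∀ X : D, S X → S' (F.obj X))
    (hG : ∀ Y : D', S' Y → S (G.obj Y)) :
    ∃ (Fbar : S.trW.Localization ⥤ S'.trW.Localization)
      (Gbar : S'.trW.Localization ⥤ S.trW.Localization),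
      Nonempty (S.trW.Q ⋙ Fbar ≅ F ⋙ S'.trW.Q) ∧
      Nonempty (S'.trW.Q ⋙ Gbar ≅ G ⋙ S.trW.Q) ∧
      Nonempty (Fbar ⊣ Gbar) := by

  have hFW : ∀ ⦃X Y : D⦄ (f : X ⟶ Y), S.trW f → S'.trW (F.map f) := by
    rintro X Y f ⟨Z, g, h, hT, hZ⟩
    exact ObjectProperty.trW.mk S' (F.map_distinguished _ hT) (hF Z hZ)
  have hGW : ∀ ⦃X Y : D'⦄ (f : X ⟶ Y), S'.trW f → S.trW (G.map f) := by
    rintro X Y f ⟨Z, g, h, hT, hZ⟩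
    exact ObjectProperty.trW.mk S (G.map_distinguished _ hT) (hG Z hZ)
  have hFinv : S.trW.IsInvertedBy (F ⋙ S'.trW.Q) := fun X Y f hf =>
    Localization.inverts S'.trW.Q S'.trW _ (hFW f hf)
  have hGinv : S'.trW.IsInvertedBy (G ⋙ S.trW.Q) := fun X Y f hf =>
    Localization.inverts S.trW.Q S.trW _ (hGW f hf)
  let Fbar : S.trW.Localization ⥤ S'.trW.Localization :=
    Localization.lift (F ⋙ S'.trW.Q) hFinv S.trW.Q
  let Gbar : S'.trW.Localization ⥤ S.trW.Localization :=
    Localization.lift (G ⋙ S.trW.Q) hGinv S'.trW.Q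
  have eF : S.trW.Q ⋙ Fbar ≅ F ⋙ S'.trW.Q :=
    Localization.Lifting.iso S.trW.Q S.trW (F ⋙ S'.trW.Q) Fbar
  have eG : S'.trW.Q ⋙ Gbar ≅ G ⋙ S.trW.Q :=
    Localization.Lifting.iso S'.trW.Q S'.trW (G ⋙ S.trW.Q) Gbar
  haveI : CatCommSq F S.trW.Q S'.trW.Q Fbar := ⟨eF.symm⟩
  haveI : CatCommSq G S'.trW.Q S.trW.Q Gbar := ⟨eG.symm⟩
  exact ⟨Fbar, Gbar, ⟨eF⟩, ⟨eG⟩,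
    ⟨adj.localization S.trW.Q S.trW S'.trW.Q S'.trW Fbar Gbar⟩⟩
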